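/- Let A = {(x,y) : x,y ∈ ℤ²_{≥0}, det(x,y) = 1}. Then Σ_{(x,y)∈A} (|x| + |y| - |x+y|)/(|x|·|y|·|x+y|) = π/2 - 1. -/

import Mathlib

open Real

namespace Stmt7


abbrev V := ℤ × ℤ

noncomputable def cplx (u : V) : ℂ := ⟨(u.1 : ℝ), (u.2 : ℝ)⟩

noncomputable def nrm (u : V) : ℝ := ‖cplx u‖

noncomputable def ang (u : V) : ℝ := Complex.arg (cplx u)

def node : List Bool → V × V
  | [] => ((1, 0), (0, 1))
  | b :: l =>
    let p := node l
    if b then (p.1 + p.2, p.2) else (p.1, p.1 + p.2)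

def Q (p : V × V) : Prop :=
  0 ≤ p.1.1 ∧ 0 ≤ p.1.2 ∧ 0 ≤ p.2.1 ∧ 0 ≤ p.2.2 ∧
    p.1.1 * p.2.2 - p.1.2 * p.2.1 = 1

lemma node_Q (l : List Bool) : Q (node l) := by
  induction l with
  | nil => refine ⟨?_, ?_, ?_, ?_, ?_⟩ <;> simp [node]
  | cons b l ih =>
    obtain ⟨h1, h2, h3, h4, h5⟩ := ih
    cases b <;>
      simp only [node, Prod.fst_add, Prod.snd_add, if_true, if_false, Bool.false_eq_true] <;>
      refine ⟨by simp [Prod.fst_add]; omega, by simp; omega, by simp; omega, by simp; omega, ?_⟩ <;>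
      simp [Prod.fst_add, Prod.snd_add] <;> ring_nf <;> nlinarith [h5]

lemma node_len (l : List Bool) :
    (l.length : ℤ) + 2 ≤ (node l).1.1 + (node l).1.2 + (node l).2.1 + (node l).2.2 := by
  induction l with
  | nil => simp [node]
  | cons b l ih =>
    obtain ⟨h1, h2, h3, h4, h5⟩ := node_Q l
    have hu : 1 ≤ (node l).1.1 + (node l).1.2 := by nlinarith
    have hv : 1 ≤ (node l).2.1 + (node l).2.2 := by nlinarith
    cases b <;> simp only [node, if_true, if_false, Bool.false_eq_true, List.length_cons] <;>
      push_cast <;> simp [Prod.fst_add, Prod.snd_add] <;> omega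



lemma node_inj : Function.Injective node := by
  intro l1
  induction l1 with
  | nil =>
    intro l2 h
    cases l2 with
    | nil => rfl
    | cons b l =>
      exfalso
      obtain ⟨h1, h2, h3, h4, h5⟩ := node_Q l
      cases b <;> simp only [node, if_true, if_false, Bool.false_eq_true] at h <;>
        rw [Prod.ext_iff, Prod.ext_iff, Prod.ext_iff] at h <;>
        simp [Prod.fst_add, Prod.snd_add] at h <;> omega
  | cons b l ih =>
    intro l2 h
    cases l2 with
    | nil =>
      exfalso
      obtain ⟨h1, h2, h3, h4, h5⟩ := node_Q l
      cases b <;> simp only [node, if_true, if_false, Bool.false_eq_true] at h <;>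
        rw [Prod.ext_iff, Prod.ext_iff, Prod.ext_iff] at h <;>
        simp [Prod.fst_add, Prod.snd_add] at h <;> omega
    | cons b' l' =>
      obtain ⟨h1, h2, h3, h4, h5⟩ := node_Q l
      obtain ⟨h1', h2', h3', h4', h5'⟩ := node_Q l'
      have : b = b' ∧ node l = node l' := by
        cases b <;> cases b' <;> simp only [node, if_true, if_false, Bool.false_eq_true] at h <;>
          rw [Prod.ext_iff, Prod.ext_iff, Prod.ext_iff] at h <;>
          simp only [Prod.fst_add, Prod.snd_add] at h <;>
          first
          | (refine ⟨rfl, ?_⟩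
             rw [Prod.ext_iff, Prod.ext_iff, Prod.ext_iff]
             refine ⟨⟨?_, ?_⟩, ?_, ?_⟩ <;> omega)
          | (exfalso; nlinarith [h.1.1, h.1.2, h.2.1, h.2.2])
      rw [this.1, ih this.2]

lemma tri {a b c d : ℤ} (h1 : 0 ≤ a) (h2 : 0 ≤ b) (h3 : 0 ≤ c) (h4 : 0 ≤ d)
    (h5 : a * d - b * c = 1) (hr : ¬(a = 1 ∧ b = 0 ∧ c = 0 ∧ d = 1)) :
    (a ≤ c ∧ b ≤ d) ∨ (c ≤ a ∧ d ≤ b) := by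
  rcases le_or_gt a c with hac | hac <;> rcases le_or_gt b d with hbd | hbd
  · exact Or.inl ⟨hac, hbd⟩
  · exfalso
    have k1 : a * d ≤ c * d := mul_le_mul_of_nonneg_right hac h4
    have k2 : c * d ≤ c * b := mul_le_mul_of_nonneg_left hbd.le h3
    nlinarith
  · rcases eq_or_lt_of_le hbd with hbd' | hbd'
    · exact Or.inr ⟨hac.le, hbd'.ge⟩
    · exfalso
      have hm : (c + 1) * (b + 1) ≤ a * d := by
        apply mul_le_mul (by omega) (by omega) (by omega) (by omega)
      have hb : b = 0 := by nlinarith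
      have hc : c = 0 := by nlinarith
      have had : a * d = 1 := by subst hb; subst hc; omega
      rcases Int.mul_eq_one_iff_eq_one_or_neg_one.1 had with ⟨ha, hd⟩ | ⟨ha, hd⟩ <;>
        exact hr ⟨by omega, by omega, by omega, by omega⟩
  · exact Or.inr ⟨hac.le, hbd.le⟩

lemma node_surj_aux : ∀ (n : ℕ) (p : V × V), Q p →
    p.1.1 + p.1.2 + p.2.1 + p.2.2 ≤ (n : ℤ) → ∃ l, node l = p := by
  intro n
  induction n with
  | zero =>
    rintro ⟨⟨a, b⟩, c, d⟩ ⟨h1, h2, h3, h4, h5⟩ hm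
    simp only at h1 h2 h3 h4 h5 hm
    exfalso
    have ha : ¬(a = 0 ∧ b = 0) := by rintro ⟨rfl, rfl⟩; simp at h5
    omega
  | succ n ih =>
    rintro ⟨⟨a, b⟩, c, d⟩ ⟨h1, h2, h3, h4, h5⟩ hm
    simp only at h1 h2 h3 h4 h5 hm
    have hu : ¬(a = 0 ∧ b = 0) := by rintro ⟨rfl, rfl⟩; simp at h5
    have hv : ¬(c = 0 ∧ d = 0) := by rintro ⟨rfl, rfl⟩; simp at h5
    by_cases hroot : a = 1 ∧ b = 0 ∧ c = 0 ∧ d = 1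
    · exact ⟨[], by obtain ⟨ra, rb, rc, rd⟩ := hroot; subst ra; subst rb; subst rc; subst rd; rfl⟩
    rcases tri h1 h2 h3 h4 h5 hroot with ⟨hc1, hc2⟩ | ⟨hc1, hc2⟩
    · obtain ⟨l, hl⟩ := ih ((a, b), (c - a, d - b))
        ⟨h1, h2, show (0:ℤ) ≤ c - a by omega, show (0:ℤ) ≤ d - b by omega,
          show a * (d - b) - b * (c - a) = 1 by linear_combination h5⟩
        (show a + b + (c - a) + (d - b) ≤ (n : ℤ) by push_cast at hm ⊢; omega)
      refine ⟨false :: l, ?_⟩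
      simp only [node, if_false, Bool.false_eq_true, hl]
      ext <;> simp <;> omega
    · obtain ⟨l, hl⟩ := ih ((a - c, b - d), (c, d))
        ⟨show (0:ℤ) ≤ a - c by omega, show (0:ℤ) ≤ b - d by omega, h3, h4,
          show (a - c) * d - (b - d) * c = 1 by linear_combination h5⟩
        (show (a - c) + (b - d) + c + d ≤ (n : ℤ) by push_cast at hm ⊢; omega)
      refine ⟨true :: l, ?_⟩
      simp only [node, if_true, hl]
      ext <;> simp <;> omega



noncomputable def th (p : V × V) : ℝ := ang p.2 - ang p.1
noncomputable def g (p : V × V) : ℝ := th p - 1 / (nrm p.1 * nrm p.2)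
noncomputable def F (p : V × V) : ℝ :=
  (nrm p.1 + nrm p.2 - nrm (p.1 + p.2)) / (nrm p.1 * nrm p.2 * nrm (p.1 + p.2))

lemma node_surj {p : V × V} (hp : Q p) : ∃ l, node l = p := by
  obtain ⟨h1, h2, h3, h4, h5⟩ := hp
  exact node_surj_aux (p.1.1 + p.1.2 + p.2.1 + p.2.2).toNat p ⟨h1, h2, h3, h4, h5⟩
    (by omega)

lemma cplx_add (u v : V) : cplx (u + v) = cplx u + cplx v := by
  simp [cplx, Complex.ext_iff, Prod.fst_add, Prod.snd_add]

lemma cplx_ne_zero {u : V} (h : ¬(u.1 = 0 ∧ u.2 = 0)) : cplx u ≠ 0 := by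
  simp only [cplx, Complex.ext_iff, Complex.zero_re, Complex.zero_im, ne_eq]
  push_cast
  intro hc
  exact h ⟨by exact_mod_cast hc.1, by exact_mod_cast hc.2⟩

lemma Q_fst_ne {p : V × V} (hp : Q p) : ¬(p.1.1 = 0 ∧ p.1.2 = 0) := by
  rintro ⟨h1, h2⟩; have h5 := hp.2.2.2.2; rw [h1, h2] at h5; simp at h5

lemma Q_snd_ne {p : V × V} (hp : Q p) : ¬(p.2.1 = 0 ∧ p.2.2 = 0) := by
  rintro ⟨h1, h2⟩; have h5 := hp.2.2.2.2; rw [h1, h2] at h5; simp at h5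

lemma nrm_pos {u : V} (h : ¬(u.1 = 0 ∧ u.2 = 0)) : 0 < nrm u := by
  simpa [nrm] using cplx_ne_zero h

lemma nrm_eq_sqrt (u : V) : nrm u = Real.sqrt ((u.1 : ℝ) ^ 2 + (u.2 : ℝ) ^ 2) := by
  rw [nrm, Complex.norm_def, Complex.normSq_apply]
  congr 1
  show (u.1 : ℝ) * (u.1 : ℝ) + (u.2 : ℝ) * (u.2 : ℝ) = _
  ring

lemma ang_mem {u : V} (h1 : 0 ≤ u.1) (h2 : 0 ≤ u.2) :
    0 ≤ ang u ∧ ang u ≤ π / 2 := by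
  constructor
  · rw [ang, Complex.arg_nonneg_iff]
    simp [cplx]; exact_mod_cast h2
  · rw [ang, Complex.arg_le_pi_div_two_iff]
    left; simp [cplx]; exact_mod_cast h1

lemma sin_th {p : V × V} (hp : Q p) : Real.sin (th p) = 1 / (nrm p.1 * nrm p.2) := by
  obtain ⟨h1, h2, h3, h4, h5⟩ := hp
  have hu := cplx_ne_zero (Q_fst_ne ⟨h1, h2, h3, h4, h5⟩)
  have hv := cplx_ne_zero (Q_snd_ne ⟨h1, h2, h3, h4, h5⟩)
  have hup := nrm_pos (Q_fst_ne ⟨h1, h2, h3, h4, h5⟩)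
  have hvp := nrm_pos (Q_snd_ne ⟨h1, h2, h3, h4, h5⟩)
  rw [th, Real.sin_sub, ang, ang, Complex.sin_arg, Complex.sin_arg,
    Complex.cos_arg hu, Complex.cos_arg hv]
  have hre1 : (cplx p.1).re = (p.1.1 : ℝ) := rfl
  have him1 : (cplx p.1).im = (p.1.2 : ℝ) := rfl
  have hre2 : (cplx p.2).re = (p.2.1 : ℝ) := rfl
  have him2 : (cplx p.2).im = (p.2.2 : ℝ) := rfl
  rw [hre1, him1, hre2, him2]
  have hdet : (p.1.1 : ℝ) * (p.2.2 : ℝ) - (p.1.2 : ℝ) * (p.2.1 : ℝ) = 1 := by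
    exact_mod_cast h5
  show (p.2.2 : ℝ) / nrm p.2 * ((p.1.1 : ℝ) / nrm p.1)
      - (p.2.1 : ℝ) / nrm p.2 * ((p.1.2 : ℝ) / nrm p.1) = 1 / (nrm p.1 * nrm p.2)
  field_simp
  linear_combination hdet

lemma th_pos {p : V × V} (hp : Q p) : 0 < th p := by
  obtain ⟨h1, h2, h3, h4, h5⟩ := hp
  have hb1 := ang_mem h1 h2
  have hb2 := ang_mem h3 h4
  by_contra hc
  push_neg at hc
  have hs : Real.sin (th p) ≤ 0 := by
    apply Real.sin_nonpos_of_nonpos_of_neg_pi_le hc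
    have := Real.pi_pos
    rw [th]; linarith [hb1.2, hb2.1]
  rw [sin_th ⟨h1, h2, h3, h4, h5⟩] at hs
  have hup := nrm_pos (Q_fst_ne ⟨h1, h2, h3, h4, h5⟩)
  have hvp := nrm_pos (Q_snd_ne ⟨h1, h2, h3, h4, h5⟩)
  have : 0 < 1 / (nrm p.1 * nrm p.2) := by positivity
  linarith

lemma th_le {p : V × V} (hp : Q p) : th p ≤ π / 2 := by
  obtain ⟨h1, h2, h3, h4, h5⟩ := hp
  have hb1 := ang_mem h1 h2
  have hb2 := ang_mem h3 h4
  rw [th]; linarith [hb1.1, hb2.2]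

lemma g_nonneg {p : V × V} (hp : Q p) : 0 ≤ g p := by
  have := sin_th hp
  have h2 := Real.sin_le (th_pos hp).le
  rw [g, ← this]
  linarith

lemma F_nonneg {p : V × V} (hp : Q p) : 0 ≤ F p := by
  have hup := nrm_pos (Q_fst_ne hp)
  have hvp := nrm_pos (Q_snd_ne hp)
  have htri : nrm (p.1 + p.2) ≤ nrm p.1 + nrm p.2 := by
    rw [nrm, nrm, nrm, cplx_add]
    exact norm_add_le _ _
  have hwp : 0 ≤ nrm (p.1 + p.2) := by rw [nrm]; positivity
  apply div_nonneg (by linarith) (by positivity)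


lemma node_cons_false (l : List Bool) :
    node (false :: l) = ((node l).1, (node l).1 + (node l).2) := by simp [node]

lemma node_cons_true (l : List Bool) :
    node (true :: l) = ((node l).1 + (node l).2, (node l).2) := by simp [node]

lemma F_eq (l : List Bool) :
    F (node l) = g (node l) - g (node (false :: l)) - g (node (true :: l)) := by
  have hQ := node_Q l
  have hQf := node_Q (false :: l)
  have ha := nrm_pos (Q_fst_ne hQ)
  have hb := nrm_pos (Q_snd_ne hQ)
  have hc : 0 < nrm ((node l).1 + (node l).2) := by
    have := nrm_pos (Q_snd_ne hQf)
    rwa [node_cons_false] at this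
  rw [node_cons_false, node_cons_true]
  simp only [F, g, th]
  field_simp
  ring

lemma th_split (l : List Bool) :
    th (node (false :: l)) + th (node (true :: l)) = th (node l) := by
  rw [node_cons_false, node_cons_true]
  simp only [th]
  ring

def level : ℕ → Finset (List Bool)
  | 0 => {[]}
  | n + 1 => (level n).biUnion (fun l => {false :: l, true :: l})

lemma mem_level {n : ℕ} {l : List Bool} : l ∈ level n ↔ l.length = n := by
  induction n generalizing l with
  | zero => simp [level, List.length_eq_zero_iff]
  | succ n ih =>
    simp only [level, Finset.mem_biUnion, Finset.mem_insert, Finset.mem_singleton]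
    constructor
    · rintro ⟨t, ht, rfl | rfl⟩ <;> simp [ih.1 ht]
    · intro hl
      cases l with
      | nil => simp at hl
      | cons b t =>
        refine ⟨t, ih.2 (by simpa using hl), ?_⟩
        cases b <;> simp

lemma sum_level_succ (h : List Bool → ℝ) (n : ℕ) :
    ∑ l ∈ level (n + 1), h l = ∑ l ∈ level n, (h (false :: l) + h (true :: l)) := by
  rw [show level (n + 1) = (level n).biUnion (fun l => {false :: l, true :: l}) from rfl,
    Finset.sum_biUnion]
  · refine Finset.sum_congr rfl fun l _ => ?_
    rw [Finset.sum_pair (by simp)]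
  · intro x _ y _ hxy
    simp only [Finset.disjoint_left, Finset.mem_insert, Finset.mem_singleton]
    rintro a (rfl | rfl) (h | h) <;> simp_all

def below : ℕ → Finset (List Bool)
  | 0 => ∅
  | n + 1 => below n ∪ level n

lemma mem_below {n : ℕ} {l : List Bool} : l ∈ below n ↔ l.length < n := by
  induction n with
  | zero => simp [below]
  | succ n ih =>
    simp only [below, Finset.mem_union, ih, mem_level]
    omega

lemma sum_below_succ (h : List Bool → ℝ) (n : ℕ) :
    ∑ l ∈ below (n + 1), h l = ∑ l ∈ below n, h l + ∑ l ∈ level n, h l := by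
  rw [show below (n + 1) = below n ∪ level n from rfl, Finset.sum_union]
  rw [Finset.disjoint_left]
  intro a ha hb
  rw [mem_below] at ha
  rw [mem_level] at hb
  omega

lemma sum_th (n : ℕ) : ∑ l ∈ level n, th (node l) = π / 2 := by
  induction n with
  | zero =>
    have h1 : ang ((1 : ℤ), (0 : ℤ)) = 0 := by
      show Complex.arg (cplx (1, 0)) = 0
      have : cplx ((1 : ℤ), (0 : ℤ)) = 1 := by
        simp [cplx, Complex.ext_iff]
      rw [this, Complex.arg_one]
    have h2 : ang ((0 : ℤ), (1 : ℤ)) = π / 2 := by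
      show Complex.arg (cplx (0, 1)) = π / 2
      have : cplx ((0 : ℤ), (1 : ℤ)) = Complex.I := by
        simp [cplx, Complex.ext_iff]
      rw [this, Complex.arg_I]
    rw [show (level 0 : Finset (List Bool)) = {[]} from rfl, Finset.sum_singleton]
    rw [show node [] = ((1, 0), (0, 1)) from rfl]
    simp only [th]
    show ang ((0 : ℤ), (1 : ℤ)) - ang ((1 : ℤ), (0 : ℤ)) = π / 2
    rw [h1, h2]; ring
  | succ n ih =>
    rw [sum_level_succ]
    rw [← ih]
    exact Finset.sum_congr rfl fun l _ => th_split l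

lemma sum_below_F (n : ℕ) :
    ∑ l ∈ below n, F (node l) = g (node []) - ∑ l ∈ level n, g (node l) := by
  induction n with
  | zero =>
    rw [show below 0 = (∅ : Finset (List Bool)) from rfl,
      show (level 0 : Finset (List Bool)) = {[]} from rfl,
      Finset.sum_empty, Finset.sum_singleton]
    ring
  | succ n ih =>
    rw [sum_below_succ, ih]
    have : ∑ l ∈ level n, F (node l)
        = ∑ l ∈ level n, g (node l) - ∑ l ∈ level (n + 1), g (node l) := by
      rw [sum_level_succ (fun l => g (node l)) n, ← Finset.sum_sub_distrib]
      exact Finset.sum_congr rfl fun l _ => by rw [F_eq]; ring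
    rw [this]
    ring

lemma g_nil : g (node []) = π / 2 - 1 := by
  have h0 : ∑ l ∈ level 0, th (node l) = π / 2 := sum_th 0
  have h1 : (level 0 : Finset (List Bool)) = {[]} := rfl
  rw [h1, Finset.sum_singleton] at h0
  have hn1 : nrm ((1 : ℤ), (0 : ℤ)) = 1 := by
    rw [nrm_eq_sqrt]; norm_num
  have hn2 : nrm ((0 : ℤ), (1 : ℤ)) = 1 := by
    rw [nrm_eq_sqrt]; norm_num
  rw [g, h0]
  rw [show node [] = ((1, 0), (0, 1)) from rfl]
  show π / 2 - 1 / (nrm ((1 : ℤ), (0 : ℤ)) * nrm ((0 : ℤ), (1 : ℤ))) = π / 2 - 1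
  rw [hn1, hn2]; norm_num


lemma half_sum_le_nrm {u : V} (h1 : 0 ≤ u.1) (h2 : 0 ≤ u.2) :
    ((u.1 : ℝ) + (u.2 : ℝ)) / 2 ≤ nrm u := by
  rw [nrm_eq_sqrt]
  have h1' : (0 : ℝ) ≤ (u.1 : ℝ) := by exact_mod_cast h1
  have h2' : (0 : ℝ) ≤ (u.2 : ℝ) := by exact_mod_cast h2
  rw [show ((u.1 : ℝ) + (u.2 : ℝ)) / 2
      = Real.sqrt ((((u.1 : ℝ) + (u.2 : ℝ)) / 2) ^ 2) from
    (Real.sqrt_sq (by positivity)).symm]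
  apply Real.sqrt_le_sqrt
  nlinarith [sq_nonneg ((u.1 : ℝ) - (u.2 : ℝ))]

lemma prod_nrm_ge {n : ℕ} {l : List Bool} (hl : l ∈ level n) :
    ((n : ℝ) + 1) / 4 ≤ nrm (node l).1 * nrm (node l).2 := by
  obtain ⟨h1, h2, h3, h4, h5⟩ := node_Q l
  have hlen := node_len l
  rw [mem_level.1 hl] at hlen
  have hu : 1 ≤ (node l).1.1 + (node l).1.2 := by nlinarith
  have hv : 1 ≤ (node l).2.1 + (node l).2.2 := by nlinarith
  have hprod : (n : ℤ) + 1 ≤ ((node l).1.1 + (node l).1.2) * ((node l).2.1 + (node l).2.2) := by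
    nlinarith
  have hprod' : ((n : ℝ) + 1) ≤ (((node l).1.1 : ℝ) + ((node l).1.2 : ℝ))
      * (((node l).2.1 : ℝ) + ((node l).2.2 : ℝ)) := by exact_mod_cast hprod
  have hb1 := half_sum_le_nrm h1 h2
  have hb2 := half_sum_le_nrm h3 h4
  have hn1 : (0 : ℝ) ≤ ((node l).1.1 : ℝ) + ((node l).1.2 : ℝ) := by
    have : (0:ℤ) ≤ (node l).1.1 + (node l).1.2 := by omega
    exact_mod_cast this
  have hn2 : (0 : ℝ) ≤ ((node l).2.1 : ℝ) + ((node l).2.2 : ℝ) := by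
    have : (0:ℤ) ≤ (node l).2.1 + (node l).2.2 := by omega
    exact_mod_cast this
  calc ((n : ℝ) + 1) / 4
      ≤ ((((node l).1.1 : ℝ) + (node l).1.2) / 2) * ((((node l).2.1 : ℝ) + (node l).2.2) / 2) := by
        linarith [hprod']
    _ ≤ nrm (node l).1 * nrm (node l).2 := by
        apply mul_le_mul hb1 hb2 (by linarith) ((by positivity : (0:ℝ) ≤ _).trans hb1)

lemma th_bound {n : ℕ} {l : List Bool} (hl : l ∈ level n) :
    th (node l) ≤ 2 * π / ((n : ℝ) + 1) := by
  have hQ := node_Q l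
  have hsin := sin_th hQ
  have hms := Real.mul_le_sin (th_pos hQ).le (th_le hQ)
  have hpr := prod_nrm_ge hl
  have hprpos : (0 : ℝ) < nrm (node l).1 * nrm (node l).2 :=
    lt_of_lt_of_le (by positivity) hpr
  have hn1 : (0 : ℝ) < (n : ℝ) + 1 := by positivity
  have hsle : Real.sin (th (node l)) ≤ 4 / ((n : ℝ) + 1) := by
    rw [hsin]
    rw [div_le_div_iff₀ hprpos hn1]
    linarith [hpr]
  have hpi := Real.pi_pos
  have : 2 / π * th (node l) ≤ 4 / ((n : ℝ) + 1) := le_trans hms hsle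
  rw [div_mul_eq_mul_div, div_le_div_iff₀ hpi hn1] at this
  rw [le_div_iff₀ hn1]
  nlinarith

noncomputable def t (n : ℕ) : ℝ := ∑ l ∈ level n, g (node l)

lemma t_nonneg (n : ℕ) : 0 ≤ t n :=
  Finset.sum_nonneg fun l _ => g_nonneg (node_Q l)

lemma t_bound {n : ℕ} (hn : 2 * π ≤ (n : ℝ) + 1) :
    t n ≤ (π ^ 3 / 2) / ((n : ℝ) + 1) ^ 2 := by
  have hpi := Real.pi_pos
  have hn1 : (0 : ℝ) < (n : ℝ) + 1 := by positivity
  have hc1 : 2 * π / ((n : ℝ) + 1) ≤ 1 := by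
    rw [div_le_one hn1]; linarith
  have key : ∀ l ∈ level n, g (node l) ≤ th (node l) * (2 * π / ((n : ℝ) + 1)) ^ 2 / 4 := by
    intro l hl
    have hQ := node_Q l
    have hthb := th_bound hl
    have hthp := th_pos hQ
    have hcube := Real.sin_gt_sub_cube hthp
    have hsin := sin_th hQ
    have : g (node l) ≤ th (node l) ^ 3 / 4 := by
      rw [g, ← hsin]; linarith [pow_pos hthp 3]
    calc g (node l) ≤ th (node l) ^ 3 / 4 := this
      _ = th (node l) * th (node l) ^ 2 / 4 := by ring
      _ ≤ th (node l) * (2 * π / ((n : ℝ) + 1)) ^ 2 / 4 := by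
          have h2 : th (node l) ^ 2 ≤ (2 * π / ((n : ℝ) + 1)) ^ 2 := by
            apply pow_le_pow_left₀ hthp.le hthb
          nlinarith
  calc t n ≤ ∑ l ∈ level n, th (node l) * (2 * π / ((n : ℝ) + 1)) ^ 2 / 4 :=
        Finset.sum_le_sum key
    _ = (∑ l ∈ level n, th (node l)) * (2 * π / ((n : ℝ) + 1)) ^ 2 / 4 := by
        rw [← Finset.sum_div, ← Finset.sum_mul]
    _ = (π / 2) * (2 * π / ((n : ℝ) + 1)) ^ 2 / 4 := by rw [sum_th]
    _ = (π ^ 3 / 2) / ((n : ℝ) + 1) ^ 2 := by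
        field_simp
        ring

lemma t_tendsto : Filter.Tendsto t Filter.atTop (nhds 0) := by
  have hup : Filter.Tendsto (fun n : ℕ => (π ^ 3 / 2) / ((n : ℝ) + 1) ^ 2)
      Filter.atTop (nhds 0) := by
    apply Filter.Tendsto.div_atTop tendsto_const_nhds
    have h1 : Filter.Tendsto (fun n : ℕ => (n : ℝ) + 1) Filter.atTop Filter.atTop :=
      Filter.tendsto_atTop_add_const_right _ 1 tendsto_natCast_atTop_atTop
    exact (Filter.tendsto_pow_atTop (by norm_num : (2:ℕ) ≠ 0)).comp h1
  apply squeeze_zero' (Filter.Eventually.of_forall t_nonneg) ?_ hup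
  have hpi := Real.pi_pos
  obtain ⟨N, hN⟩ := exists_nat_ge (2 * π)
  refine Filter.eventually_atTop.2 ⟨N, fun n hn => t_bound ?_⟩
  have : (N : ℝ) ≤ (n : ℝ) := by exact_mod_cast hn
  linarith


noncomputable def fL (l : List Bool) : ℝ := F (node l)

lemma hasSum_fL : HasSum fL (π / 2 - 1) := by
  have hnn : ∀ l, 0 ≤ fL l := fun l => F_nonneg (node_Q l)
  apply hasSum_of_isLUB_of_nonneg _ hnn
  constructor
  · rintro x ⟨s, rfl⟩
    have hsub : s ⊆ below (s.sup List.length + 1) := fun l hl =>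
      mem_below.2 (Nat.lt_succ_of_le (Finset.le_sup hl))
    calc ∑ l ∈ s, fL l ≤ ∑ l ∈ below (s.sup List.length + 1), fL l :=
          Finset.sum_le_sum_of_subset_of_nonneg hsub fun l _ _ => hnn l
      _ = g (node []) - t (s.sup List.length + 1) := sum_below_F _
      _ ≤ π / 2 - 1 := by rw [g_nil]; linarith [t_nonneg (s.sup List.length + 1)]
  · intro b hb
    have h1 : ∀ n, g (node []) - t n ≤ b := by
      intro n
      have hm := hb (Set.mem_range_self (below n))
      have heq : ∑ i ∈ below n, fL i = g (node []) - t n := sum_below_F n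
      rw [heq] at hm
      exact hm
    have h2 : Filter.Tendsto (fun n => g (node []) - t n) Filter.atTop (nhds (π / 2 - 1)) := by
      rw [g_nil]
      simpa using tendsto_const_nhds.sub t_tendsto
    exact le_of_tendsto h2 (Filter.Eventually.of_forall h1)

noncomputable def e : List Bool ≃ {p : V × V // Q p} :=
  Equiv.ofBijective (fun l => ⟨node l, node_Q l⟩)
    ⟨fun l1 l2 h => node_inj (congrArg Subtype.val h),
     fun p => (node_surj p.2).imp fun l hl => Subtype.ext hl⟩

lemma F_expr (p : V × V) :
    F p = (Real.sqrt ((p.1.1 : ℝ) ^ 2 + (p.1.2 : ℝ) ^ 2)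
        + Real.sqrt ((p.2.1 : ℝ) ^ 2 + (p.2.2 : ℝ) ^ 2)
        - Real.sqrt (((p.1.1 : ℝ) + p.2.1) ^ 2 + ((p.1.2 : ℝ) + p.2.2) ^ 2)) /
      (Real.sqrt ((p.1.1 : ℝ) ^ 2 + (p.1.2 : ℝ) ^ 2)
        * Real.sqrt ((p.2.1 : ℝ) ^ 2 + (p.2.2 : ℝ) ^ 2)
        * Real.sqrt (((p.1.1 : ℝ) + p.2.1) ^ 2 + ((p.1.2 : ℝ) + p.2.2) ^ 2)) := by
  simp only [F, nrm_eq_sqrt, Prod.fst_add, Prod.snd_add]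
  push_cast
  rfl


end Stmt7

open Stmt7 in
theorem stmt7 :
    (∑' p : {p : (ℤ × ℤ) × (ℤ × ℤ) //
        0 ≤ p.1.1 ∧ 0 ≤ p.1.2 ∧ 0 ≤ p.2.1 ∧ 0 ≤ p.2.2 ∧
        p.1.1 * p.2.2 - p.1.2 * p.2.1 = 1},
      (Real.sqrt ((p.1.1.1 : ℝ) ^ 2 + (p.1.1.2 : ℝ) ^ 2)
        + Real.sqrt ((p.1.2.1 : ℝ) ^ 2 + (p.1.2.2 : ℝ) ^ 2)
        - Real.sqrt (((p.1.1.1 : ℝ) + p.1.2.1) ^ 2 + ((p.1.1.2 : ℝ) + p.1.2.2) ^ 2)) /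
      (Real.sqrt ((p.1.1.1 : ℝ) ^ 2 + (p.1.1.2 : ℝ) ^ 2)
        * Real.sqrt ((p.1.2.1 : ℝ) ^ 2 + (p.1.2.2 : ℝ) ^ 2)
        * Real.sqrt (((p.1.1.1 : ℝ) + p.1.2.1) ^ 2 + ((p.1.1.2 : ℝ) + p.1.2.2) ^ 2)))
      = Real.pi / 2 - 1 := by
  have h2 : HasSum (fun p : {p : V × V // Q p} =>
      (Real.sqrt (((p : V × V).1.1 : ℝ) ^ 2 + ((p : V × V).1.2 : ℝ) ^ 2)
        + Real.sqrt (((p : V × V).2.1 : ℝ) ^ 2 + ((p : V × V).2.2 : ℝ) ^ 2)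
        - Real.sqrt ((((p : V × V).1.1 : ℝ) + (p : V × V).2.1) ^ 2
            + (((p : V × V).1.2 : ℝ) + (p : V × V).2.2) ^ 2)) /
      (Real.sqrt (((p : V × V).1.1 : ℝ) ^ 2 + ((p : V × V).1.2 : ℝ) ^ 2)
        * Real.sqrt (((p : V × V).2.1 : ℝ) ^ 2 + ((p : V × V).2.2 : ℝ) ^ 2)
        * Real.sqrt ((((p : V × V).1.1 : ℝ) + (p : V × V).2.1) ^ 2
            + (((p : V × V).1.2 : ℝ) + (p : V × V).2.2) ^ 2)))
      (Real.pi / 2 - 1) := by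
    rw [← Equiv.hasSum_iff e]
    have : ∀ l : List Bool, fL l = F (node l) := fun _ => rfl
    convert hasSum_fL using 1
    funext l
    show _ = fL l
    rw [fL, F_expr]
    rfl
  exact h2.tsum_eq
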